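/- For any real matrices X, Y ∈ ℝ^{M×N}, the nuclear norm of Xᵀ Y equals the fidelity of the Gram matrices: ‖Xᵀ Y‖_* = Tr[((X Xᵀ)^{1/2} (Y Yᵀ) (X Xᵀ)^{1/2})^{1/2}]. -/

import Mathlib

open Matrix

lemma real_conjTranspose_eq {m n : ℕ} (A : Matrix (Fin m) (Fin n) ℝ) : Aᴴ = Aᵀ := rfl

lemma psd_tmul {m n : ℕ} (A : Matrix (Fin m) (Fin n) ℝ) : (Aᵀ * A).PosSemidef := by
  have h := Matrix.posSemidef_conjTranspose_mul_self A
  rwa [real_conjTranspose_eq] at h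

lemma psd_gram {m n : ℕ} (A : Matrix (Fin m) (Fin n) ℝ) : (A * Aᵀ).PosSemidef := by
  have h := Matrix.posSemidef_self_mul_conjTranspose A
  rwa [real_conjTranspose_eq] at h

namespace Matrix.PosSemidef

/-- The square root of a positive semidefinite matrix, as defined in the older Mathlib. -/
noncomputable def sqrt {n : Type*} [Fintype n] [DecidableEq n]
    {A : Matrix n n ℝ} (hA : A.PosSemidef) : Matrix n n ℝ :=
  hA.1.eigenvectorUnitary.1 * diagonal ((√·) ∘ hA.1.eigenvalues) *
  (star hA.1.eigenvectorUnitary : Matrix n n ℝ)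

lemma posSemidef_sqrt {n : Type*} [Fintype n] [DecidableEq n]
    {A : Matrix n n ℝ} (hA : A.PosSemidef) : PosSemidef hA.sqrt := by
  have hD : (diagonal (((√·) ∘ hA.1.eigenvalues) : n → ℝ)).PosSemidef := by
    rw [Matrix.posSemidef_diagonal_iff]
    intro i
    exact Real.sqrt_nonneg _
  have h := hD.mul_mul_conjTranspose_same hA.1.eigenvectorUnitary.1
  unfold sqrt
  simpa [Matrix.star_eq_conjTranspose] using h

end Matrix.PosSemidef

lemma psd_sand {M : ℕ} {Kx Ky : Matrix (Fin M) (Fin M) ℝ} (hx : Kx.PosSemidef) (hy : Ky.PosSemidef) :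
    (hx.sqrt * Ky * hx.sqrt).PosSemidef := by
  have h := hy.mul_mul_conjTranspose_same hx.sqrt
  rwa [hx.posSemidef_sqrt.isHermitian.eq] at h

/-- Nuclear norm: sum of singular values, i.e. `Tr[(AᵀA)^{1/2}]`. -/
noncomputable def nuclearNorm {m n : ℕ} (A : Matrix (Fin m) (Fin n) ℝ) : ℝ :=
  (Matrix.PosSemidef.sqrt (psd_tmul A)).trace

/-- Frobenius norm. -/
noncomputable def frobNorm {m n : ℕ} (A : Matrix (Fin m) (Fin n) ℝ) : ℝ :=
  Real.sqrt (Matrix.trace (Aᵀ * A))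

/-- Fidelity `Tr[(Kx^{1/2} Ky Kx^{1/2})^{1/2}]` between PSD matrices. -/
noncomputable def fidelity {M : ℕ} {Kx Ky : Matrix (Fin M) (Fin M) ℝ}
    (hx : Kx.PosSemidef) (hy : Ky.PosSemidef) : ℝ :=
  (Matrix.PosSemidef.sqrt (psd_sand hx hy)).trace

open Polynomial


lemma trace_sqrt {n : ℕ} {A : Matrix (Fin n) (Fin n) ℝ} (hA : A.PosSemidef) :
    hA.sqrt.trace = ∑ i, Real.sqrt (hA.1.eigenvalues i) := by
  rw [Matrix.PosSemidef.sqrt, Matrix.trace_mul_cycle]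
  have h1 : (star hA.1.eigenvectorUnitary.1 : Matrix (Fin n) (Fin n) ℝ) * hA.1.eigenvectorUnitary.1 = 1 := by
    exact (Matrix.mem_unitaryGroup_iff').mp hA.1.eigenvectorUnitary.2
  rw [h1, Matrix.one_mul, Matrix.trace_diagonal]
  simp


lemma det_smul_one_sub_map {n : ℕ} {A : Matrix (Fin n) (Fin n) ℝ} (hA : A.IsHermitian) :
    det ((X : ℝ[X]) • (1 : Matrix (Fin n) (Fin n) ℝ[X]) - A.map C)
      = ∏ i, ((X : ℝ[X]) - C (hA.eigenvalues i)) := by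
  have hspec := hA.spectral_theorem
  set U : Matrix (Fin n) (Fin n) ℝ := hA.eigenvectorUnitary.1 with hU
  have hUU : U * star U = 1 := (Matrix.mem_unitaryGroup_iff).mp hA.eigenvectorUnitary.2
  set U' : Matrix (Fin n) (Fin n) ℝ[X] := U.map C
  set V' : Matrix (Fin n) (Fin n) ℝ[X] := (star U : Matrix (Fin n) (Fin n) ℝ).map C
  have hUV : U' * V' = 1 := by
    rw [← Matrix.map_mul, hUU, Matrix.map_one C (map_zero C) (map_one C)]
  have hDmap : A.map C = U' * diagonal (fun i => C (hA.eigenvalues i)) * V' := by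
    conv_lhs => rw [hspec, Unitary.conjStarAlgAut_apply]
    rw [Matrix.map_mul, Matrix.map_mul]
    have hd : (diagonal (RCLike.ofReal ∘ hA.eigenvalues)).map C
        = diagonal (fun i => C (hA.eigenvalues i)) := by
      rw [Matrix.diagonal_map (map_zero C)]
      rfl
    rw [hd]
  have hsmul : (X : ℝ[X]) • (1 : Matrix (Fin n) (Fin n) ℝ[X]) = U' * ((X : ℝ[X]) • 1) * V' := by
    rw [Matrix.mul_smul, Matrix.mul_one, Matrix.smul_mul, hUV]
  rw [hDmap, hsmul, Matrix.mul_assoc, Matrix.mul_assoc, ← Matrix.mul_sub, ← Matrix.sub_mul,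
    det_mul, det_mul]
  have hVU : V' * U' = 1 := by
    rw [← Matrix.map_mul, (Matrix.mem_unitaryGroup_iff').mp hA.eigenvectorUnitary.2,
      Matrix.map_one C (map_zero C) (map_one C)]
  rw [mul_comm (U'.det), mul_assoc, ← det_mul, hVU, det_one, mul_one]
  have : (X : ℝ[X]) • (1 : Matrix (Fin n) (Fin n) ℝ[X]) - diagonal (fun i => C (hA.eigenvalues i))
      = diagonal (fun i => (X : ℝ[X]) - C (hA.eigenvalues i)) := by
    rw [Matrix.smul_one_eq_diagonal, ← Matrix.diagonal_sub]
  rw [this, det_diagonal]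


lemma block_det_identity {m n : ℕ} (B : Matrix (Fin m) (Fin n) ℝ) :
    (X : ℝ[X]) ^ m * det ((X : ℝ[X]) • (1 : Matrix (Fin n) (Fin n) ℝ[X]) - (Bᵀ * B).map C)
      = (X : ℝ[X]) ^ n * det ((X : ℝ[X]) • (1 : Matrix (Fin m) (Fin m) ℝ[X]) - (B * Bᵀ).map C) := by
  set Bp : Matrix (Fin m) (Fin n) ℝ[X] := B.map C with hBp
  have hT : (Bᵀ * B).map C = Bpᵀ * Bp := by
    rw [Matrix.map_mul, hBp, Matrix.transpose_map]
  have hG : (B * Bᵀ).map C = Bp * Bpᵀ := by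
    rw [Matrix.map_mul, hBp, Matrix.transpose_map]
  rw [hT, hG]
  set U : Matrix (Fin m ⊕ Fin n) (Fin m ⊕ Fin n) ℝ[X] :=
    fromBlocks ((X : ℝ[X]) • 1) Bp Bpᵀ 1 with hUdef
  set V : Matrix (Fin m ⊕ Fin n) (Fin m ⊕ Fin n) ℝ[X] :=
    fromBlocks 1 Bp Bpᵀ ((X : ℝ[X]) • 1) with hVdef
  have hdetU : U.det = det ((X : ℝ[X]) • (1 : Matrix (Fin m) (Fin m) ℝ[X]) - Bp * Bpᵀ) :=
    Matrix.det_fromBlocks_one₂₂ _ _ _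
  have hdetV : V.det = det ((X : ℝ[X]) • (1 : Matrix (Fin n) (Fin n) ℝ[X]) - Bpᵀ * Bp) :=
    Matrix.det_fromBlocks_one₁₁ _ _ _
  set L : Matrix (Fin m ⊕ Fin n) (Fin m ⊕ Fin n) ℝ[X] :=
    fromBlocks ((X : ℝ[X]) • 1) 0 0 1 with hLdef
  set R : Matrix (Fin m ⊕ Fin n) (Fin m ⊕ Fin n) ℝ[X] :=
    fromBlocks 1 0 0 ((X : ℝ[X]) • 1) with hRdef
  have hkey : L * V = U * R := by
    rw [hLdef, hVdef, hUdef, hRdef, Matrix.fromBlocks_multiply, Matrix.fromBlocks_multiply]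
    ext (i|i) (j|j) <;> simp [Matrix.fromBlocks, Matrix.smul_mul, Matrix.mul_smul]
  have hdetL : L.det = (X : ℝ[X]) ^ m := by
    rw [hLdef, Matrix.det_fromBlocks_zero₂₁, Matrix.det_one, mul_one, Matrix.det_smul,
      Matrix.det_one, mul_one, Fintype.card_fin]
  have hdetR : R.det = (X : ℝ[X]) ^ n := by
    rw [hRdef, Matrix.det_fromBlocks_zero₂₁, Matrix.det_one, one_mul, Matrix.det_smul,
      Matrix.det_one, mul_one, Fintype.card_fin]
  have := congrArg Matrix.det hkey
  rw [Matrix.det_mul, Matrix.det_mul, hdetL, hdetR, hdetU, hdetV] at this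
  rw [this, mul_comm]


lemma prod_X_sub_C_fun {k : ℕ} (a : Fin k → ℝ) :
    ∏ i, ((X : ℝ[X]) - C (a i)) = ((Finset.univ.val.map a).map (fun r => (X : ℝ[X]) - C r)).prod := by
  rw [Multiset.map_map]
  rfl

lemma multiset_key {m n : ℕ} (a : Fin n → ℝ) (b : Fin m → ℝ)
    (h : (X : ℝ[X]) ^ m * ∏ i, ((X : ℝ[X]) - C (a i))
       = (X : ℝ[X]) ^ n * ∏ i, ((X : ℝ[X]) - C (b i))) :
    Multiset.replicate m (0:ℝ) + Finset.univ.val.map a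
      = Multiset.replicate n (0:ℝ) + Finset.univ.val.map b := by
  have ha0 : (∏ i, ((X : ℝ[X]) - C (a i))) ≠ 0 := by
    apply Finset.prod_ne_zero_iff.mpr
    intro i _
    exact X_sub_C_ne_zero _
  have hb0 : (∏ i, ((X : ℝ[X]) - C (b i))) ≠ 0 := by
    apply Finset.prod_ne_zero_iff.mpr
    intro i _
    exact X_sub_C_ne_zero _
  have := congrArg Polynomial.roots h
  rw [Polynomial.roots_mul (mul_ne_zero (pow_ne_zero _ X_ne_zero) ha0),
      Polynomial.roots_mul (mul_ne_zero (pow_ne_zero _ X_ne_zero) hb0),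
      Polynomial.roots_pow, Polynomial.roots_pow, Polynomial.roots_X,
      prod_X_sub_C_fun, prod_X_sub_C_fun,
      Polynomial.roots_multiset_prod_X_sub_C, Polynomial.roots_multiset_prod_X_sub_C] at this
  simpa [Multiset.nsmul_singleton] using this


lemma sqrt_congr {n : ℕ} {A A' : Matrix (Fin n) (Fin n) ℝ} (h : A = A')
    (hA : A.PosSemidef) (hA' : A'.PosSemidef) : hA.sqrt = hA'.sqrt := by
  subst h; rfl

lemma sum_sqrt_of_multiset_eq {m n : ℕ} (a : Fin n → ℝ) (b : Fin m → ℝ)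
    (h : Multiset.replicate m (0:ℝ) + Finset.univ.val.map a
       = Multiset.replicate n (0:ℝ) + Finset.univ.val.map b) :
    ∑ i, Real.sqrt (a i) = ∑ i, Real.sqrt (b i) := by
  have := congrArg (fun s : Multiset ℝ => ((s.map Real.sqrt).sum)) h
  simp only [Multiset.map_add, Multiset.sum_add, Multiset.map_replicate, Real.sqrt_zero,
    Multiset.sum_replicate, smul_zero, zero_add, Multiset.map_map] at this
  rw [Finset.sum, Finset.sum]
  exact this


lemma sqrt_mul_self' {n : ℕ} {A : Matrix (Fin n) (Fin n) ℝ} (hA : A.PosSemidef) :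
    hA.sqrt * hA.sqrt = A := by
  have hspec := hA.1.spectral_theorem
  rw [Unitary.conjStarAlgAut_apply] at hspec
  have h1 : (star hA.1.eigenvectorUnitary.1 : Matrix (Fin n) (Fin n) ℝ) * hA.1.eigenvectorUnitary.1 = 1 :=
    (Matrix.mem_unitaryGroup_iff').mp hA.1.eigenvectorUnitary.2
  unfold Matrix.PosSemidef.sqrt
  calc _ = hA.1.eigenvectorUnitary.1 * (diagonal ((√·) ∘ hA.1.eigenvalues) *
        ((star hA.1.eigenvectorUnitary.1 : Matrix (Fin n) (Fin n) ℝ) * hA.1.eigenvectorUnitary.1) *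
        diagonal ((√·) ∘ hA.1.eigenvalues)) * (star hA.1.eigenvectorUnitary.1 : Matrix (Fin n) (Fin n) ℝ) := by
          simp only [Matrix.mul_assoc]
    _ = A := by
      rw [h1, Matrix.mul_one, diagonal_mul_diagonal]
      conv_rhs => rw [hspec]
      congr 3
      ext i
      simp [Real.mul_self_sqrt (hA.eigenvalues_nonneg i)]

lemma trace_sqrt_tmul_eq_gram {m n : ℕ} (B : Matrix (Fin m) (Fin n) ℝ) :
    (psd_tmul B).sqrt.trace = (psd_gram B).sqrt.trace := by
  rw [trace_sqrt, trace_sqrt]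
  apply sum_sqrt_of_multiset_eq
  apply multiset_key
  have h3 := block_det_identity B
  rw [det_smul_one_sub_map (psd_tmul B).1, det_smul_one_sub_map (psd_gram B).1] at h3
  exact h3

theorem nuclearNorm_eq_fidelity_of_grams (M N : ℕ) (X Y : Matrix (Fin M) (Fin N) ℝ) :
    nuclearNorm (Xᵀ * Y) = fidelity (psd_gram X) (psd_gram Y) := by
  set S : Matrix (Fin M) (Fin M) ℝ := (psd_gram X).sqrt with hSdef
  have hS : Sᵀ = S := (psd_gram X).posSemidef_sqrt.isHermitian
  have hSS : S * S = X * Xᵀ := sqrt_mul_self' (psd_gram X)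
  have hB1 : (Xᵀ * Y)ᵀ * (Xᵀ * Y) = (S * Y)ᵀ * (S * Y) := by
    rw [Matrix.transpose_mul, Matrix.transpose_mul, Matrix.transpose_transpose, hS,
      Matrix.mul_assoc, Matrix.mul_assoc, ← Matrix.mul_assoc X, ← Matrix.mul_assoc S, hSS]
  have hB2 : (S * Y) * (S * Y)ᵀ = S * (Y * Yᵀ) * S := by
    rw [Matrix.transpose_mul, hS, Matrix.mul_assoc, Matrix.mul_assoc, Matrix.mul_assoc]
  rw [nuclearNorm, fidelity]
  rw [sqrt_congr hB1 (psd_tmul (Xᵀ * Y)) (psd_tmul (S * Y))]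
  rw [trace_sqrt_tmul_eq_gram (S * Y)]
  rw [sqrt_congr hB2 (psd_gram (S * Y)) (psd_sand (psd_gram X) (psd_gram Y))]
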